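/- arXiv:1001.3049 — 3 statements merged into one kernel-verified Lean document; each statement's English description precedes it below -/
import Mathlib

section
/- Composition theorem: Let f : ℝ × L²(P,H) → L²(P,H) be jointly continuous, square-mean almost automorphic in t for each fixed x, and L-Lipschitz in the sense E‖f(t,x) − f(t,y)‖² ≤ L·E‖x−y‖² for all x, y and all t (L > 0 independent of t). Then for every square-mean almost automorphic process x : ℝ → L²(P,H), the process F(t) := f(t, x(t)) is square-mean almost automorphic. -/
open Filter MeasureTheory Set Real

/-- The codomain `E` models the Hilbert space `L²(P, H)` of square-integrable
`H`-valued random variables, so that `‖·‖ ^ 2` models the second moment `E‖·‖²`.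
A process `x : ℝ → E` is square-mean almost automorphic if it is stochastically
continuous (i.e. continuous into `L²`) and every sequence of reals `s'` admits a
subsequence `s' ∘ φ` and a limiting process `y` with
`E‖x(t+sₙ) − y(t)‖² → 0` and `E‖y(t−sₙ) − x(t)‖² → 0` for each `t`. -/
def SqMeanAA {E : Type*} [NormedAddCommGroup E] (x : ℝ → E) : Prop :=
  Continuous x ∧
  ∀ s' : ℕ → ℝ, ∃ φ : ℕ → ℕ, StrictMono φ ∧ ∃ y : ℝ → E,
    (∀ t : ℝ, Tendsto (fun n => ‖x (t + s' (φ n)) - y t‖ ^ 2) atTop (nhds 0)) ∧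
    (∀ t : ℝ, Tendsto (fun n => ‖y (t - s' (φ n)) - x t‖ ^ 2) atTop (nhds 0))

private lemma sq_tendsto_iff {g : ℕ → ℝ} (hg : ∀ n, 0 ≤ g n) :
    Tendsto (fun n => g n ^ 2) atTop (nhds 0) ↔ Tendsto g atTop (nhds 0) := by
  constructor
  · intro h
    have h2 : Tendsto (fun n => Real.sqrt (g n ^ 2)) atTop (nhds (Real.sqrt 0)) :=
      (Real.continuous_sqrt.tendsto 0).comp h
    simpa [Real.sqrt_sq (hg _)] using h2
  · intro h
    simpa using h.pow 2

/-- Composition theorem: if `f(t, x)` is jointly continuous, square-mean almost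
automorphic in `t` for each fixed `x`, and uniformly `L`-Lipschitz in square
mean, then for any square-mean almost automorphic process `x` the process
`F(t) = f(t, x(t))` is square-mean almost automorphic. -/
theorem sqMeanAA_comp {E : Type*} [NormedAddCommGroup E]
    (f : ℝ → E → E)
    (hjc : Continuous fun p : ℝ × E => f p.1 p.2)
    (hfAA : ∀ s' : ℕ → ℝ, ∃ φ : ℕ → ℕ, StrictMono φ ∧ ∃ ftil : ℝ → E → E,
      (∀ (t : ℝ) (u : E),
        Tendsto (fun n => ‖f (t + s' (φ n)) u - ftil t u‖ ^ 2) atTop (nhds 0)) ∧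
      (∀ (t : ℝ) (u : E),
        Tendsto (fun n => ‖ftil (t - s' (φ n)) u - f t u‖ ^ 2) atTop (nhds 0)))
    (L : ℝ) (hL : 0 < L)
    (hLip : ∀ (t : ℝ) (u v : E), ‖f t u - f t v‖ ^ 2 ≤ L * ‖u - v‖ ^ 2)
    {x : ℝ → E} (hx : SqMeanAA x) :
    SqMeanAA (fun t => f t (x t)) := by
  obtain ⟨hxc, hxAA⟩ := hx
  set sL := Real.sqrt L with hsL
  have hsL0 : 0 ≤ sL := Real.sqrt_nonneg L
  -- norm-form Lipschitz for f
  have hLip' : ∀ (t : ℝ) (u v : E), ‖f t u - f t v‖ ≤ sL * ‖u - v‖ := by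
    intro t u v
    have h1 : ‖f t u - f t v‖ = Real.sqrt (‖f t u - f t v‖ ^ 2) :=
      (Real.sqrt_sq (norm_nonneg _)).symm
    rw [h1]
    calc Real.sqrt (‖f t u - f t v‖ ^ 2) ≤ Real.sqrt (L * ‖u - v‖ ^ 2) :=
          Real.sqrt_le_sqrt (hLip t u v)
      _ = sL * ‖u - v‖ := by
          rw [Real.sqrt_mul hL.le, Real.sqrt_sq (norm_nonneg _)]
  constructor
  · exact hjc.comp (continuous_id.prodMk hxc)
  intro s'
  obtain ⟨φ₁, hφ₁, y, hy₁, hy₂⟩ := hxAA s'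
  obtain ⟨φ₂, hφ₂, ftil, hf₁, hf₂⟩ := hfAA (s' ∘ φ₁)
  -- convergence facts along the composed subsequence
  have hy₁' : ∀ t : ℝ, Tendsto (fun n => ‖x (t + s' (φ₁ (φ₂ n))) - y t‖) atTop (nhds 0) :=
    fun t => ((sq_tendsto_iff fun n => norm_nonneg _).mp (hy₁ t)).comp hφ₂.tendsto_atTop
  have hy₂' : ∀ t : ℝ, Tendsto (fun n => ‖y (t - s' (φ₁ (φ₂ n))) - x t‖) atTop (nhds 0) :=
    fun t => ((sq_tendsto_iff fun n => norm_nonneg _).mp (hy₂ t)).comp hφ₂.tendsto_atTop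
  have hf₁' : ∀ (t : ℝ) (u : E),
      Tendsto (fun n => ‖f (t + s' (φ₁ (φ₂ n))) u - ftil t u‖) atTop (nhds 0) :=
    fun t u => (sq_tendsto_iff fun n => norm_nonneg _).mp (hf₁ t u)
  have hf₂' : ∀ (t : ℝ) (u : E),
      Tendsto (fun n => ‖ftil (t - s' (φ₁ (φ₂ n))) u - f t u‖) atTop (nhds 0) :=
    fun t u => (sq_tendsto_iff fun n => norm_nonneg _).mp (hf₂ t u)
  -- ftil is also Lipschitz (as a limit of Lipschitz maps)
  have hLipT : ∀ (t : ℝ) (u v : E), ‖ftil t u - ftil t v‖ ≤ sL * ‖u - v‖ := by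
    intro t u v
    have hbound : ∀ n : ℕ, ‖ftil t u - ftil t v‖ ≤
        ‖f (t + s' (φ₁ (φ₂ n))) u - ftil t u‖ + sL * ‖u - v‖ +
          ‖f (t + s' (φ₁ (φ₂ n))) v - ftil t v‖ := by
      intro n
      set s := s' (φ₁ (φ₂ n))
      calc ‖ftil t u - ftil t v‖
          ≤ ‖ftil t u - f (t + s) u‖ + ‖f (t + s) u - f (t + s) v‖ +
              ‖f (t + s) v - ftil t v‖ := by
            have := norm_add₃_le (a := ftil t u - f (t + s) u)
              (b := f (t + s) u - f (t + s) v) (c := f (t + s) v - ftil t v)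
            simpa using this
        _ ≤ ‖f (t + s) u - ftil t u‖ + sL * ‖u - v‖ + ‖f (t + s) v - ftil t v‖ := by
            rw [norm_sub_rev (ftil t u)]
            gcongr
            exact hLip' _ u v
    have hlim : Tendsto (fun n => ‖f (t + s' (φ₁ (φ₂ n))) u - ftil t u‖ + sL * ‖u - v‖ +
        ‖f (t + s' (φ₁ (φ₂ n))) v - ftil t v‖) atTop (nhds (0 + sL * ‖u - v‖ + 0)) :=
      ((hf₁' t u).add tendsto_const_nhds).add (hf₁' t v)
    have := ge_of_tendsto hlim (Eventually.of_forall hbound)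
    simpa using this
  refine ⟨φ₁ ∘ φ₂, hφ₁.comp hφ₂, fun t => ftil t (y t), ?_, ?_⟩
  · intro t
    rw [sq_tendsto_iff fun n => norm_nonneg _]
    apply squeeze_zero (fun n => norm_nonneg _)
      (g := fun n => sL * ‖x (t + s' (φ₁ (φ₂ n))) - y t‖ +
        ‖f (t + s' (φ₁ (φ₂ n))) (y t) - ftil t (y t)‖)
    · intro n
      set s := s' (φ₁ (φ₂ n))
      calc ‖f (t + s) (x (t + s)) - ftil t (y t)‖
          ≤ ‖f (t + s) (x (t + s)) - f (t + s) (y t)‖ + ‖f (t + s) (y t) - ftil t (y t)‖ :=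
            norm_sub_le_norm_sub_add_norm_sub _ _ _
        _ ≤ sL * ‖x (t + s) - y t‖ + ‖f (t + s) (y t) - ftil t (y t)‖ := by
            gcongr; exact hLip' _ _ _
    · simpa using ((tendsto_const_nhds.mul (hy₁' t)).add (hf₁' t (y t)))
  · intro t
    rw [sq_tendsto_iff fun n => norm_nonneg _]
    apply squeeze_zero (fun n => norm_nonneg _)
      (g := fun n => sL * ‖y (t - s' (φ₁ (φ₂ n))) - x t‖ +
        ‖ftil (t - s' (φ₁ (φ₂ n))) (x t) - f t (x t)‖)
    · intro n
      set s := s' (φ₁ (φ₂ n))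
      calc ‖ftil (t - s) (y (t - s)) - f t (x t)‖
          ≤ ‖ftil (t - s) (y (t - s)) - ftil (t - s) (x t)‖ +
              ‖ftil (t - s) (x t) - f t (x t)‖ :=
            norm_sub_le_norm_sub_add_norm_sub _ _ _
        _ ≤ sL * ‖y (t - s) - x t‖ + ‖ftil (t - s) (x t) - f t (x t)‖ := by
            gcongr; exact hLipT _ _ _
    · simpa using ((tendsto_const_nhds.mul (hy₂' t)).add (hf₂' t (x t)))
end

section
/- Uniqueness via decay and almost automorphy: Let z : ℝ → L²(P,H) be square-mean almost automorphic and suppose that for some a ∈ ℝ and constants K, ω > 0, ‖z(t)‖ ≤ K e^{−ω(t−a)} ‖z(a)‖ for all t ≥ a (so z(t) → 0 as t → +∞ in L²). Then z(t) = 0 for all t ∈ ℝ. -/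
open Filter MeasureTheory Set Real

/-- Uniqueness via decay and almost automorphy: a square-mean almost
automorphic process `z` satisfying the exponential decay
`‖z(t)‖₂ ≤ K e^{−ω(t−a)} ‖z(a)‖₂` for all `t ≥ a` must vanish identically. -/
theorem sqMeanAA_decay_eq_zero {E : Type*} [NormedAddCommGroup E]
    {z : ℝ → E} (hz : SqMeanAA z) (a K ω : ℝ) (hK : 0 < K) (hω : 0 < ω)
    (hdecay : ∀ t : ℝ, a ≤ t → ‖z t‖ ≤ K * Real.exp (-ω * (t - a)) * ‖z a‖) :
    ∀ t : ℝ, z t = 0 := by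
  -- z tends to 0 at +∞
  have hzero : Tendsto (fun t => ‖z t‖) atTop (nhds 0) := by
    have hbound : Tendsto (fun t => K * Real.exp (-ω * (t - a)) * ‖z a‖) atTop (nhds 0) := by
      have : Tendsto (fun t : ℝ => Real.exp (-ω * (t - a))) atTop (nhds 0) := by
        apply Real.tendsto_exp_atBot.comp
        have : Tendsto (fun t : ℝ => -ω * (t - a)) atTop atBot := by
          apply Tendsto.neg_mul_atTop (neg_neg_iff_pos.mpr hω) tendsto_const_nhds
          exact tendsto_atTop_add_const_right _ _ tendsto_id
        exact this
      have := (this.const_mul K).mul_const ‖z a‖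
      simpa using this
    apply squeeze_zero' (Eventually.of_forall fun t => norm_nonneg _) _ hbound
    filter_upwards [eventually_ge_atTop a] with t ht
    exact hdecay t ht
  obtain ⟨hc, hAA⟩ := hz
  obtain ⟨φ, hφ, y, h1, h2⟩ := hAA (fun n => (n : ℝ))
  have hy : ∀ t : ℝ, y t = 0 := by
    intro t
    have hseq : Tendsto (fun n => ‖z (t + ((φ n : ℕ) : ℝ)) - y t‖ ^ 2) atTop
        (nhds (‖(0 : E) - y t‖ ^ 2)) := by
      have hts : Tendsto (fun n => t + ((φ n : ℕ) : ℝ)) atTop atTop := by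
        apply tendsto_atTop_add_const_left
        exact tendsto_natCast_atTop_atTop.comp hφ.tendsto_atTop
      have hz0 : Tendsto (fun n => z (t + ((φ n : ℕ) : ℝ))) atTop (nhds 0) := by
        rw [tendsto_zero_iff_norm_tendsto_zero]
        exact hzero.comp hts
      exact ((hz0.sub tendsto_const_nhds).norm.pow 2)
    have := tendsto_nhds_unique hseq (h1 t)
    have h0 : ‖(0 : E) - y t‖ = 0 := by
      have := pow_eq_zero_iff (n := 2) (by norm_num) |>.mp this
      exact this
    simpa using (norm_eq_zero.mp h0).symm
  intro t
  have h2t := h2 t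
  simp only [hy] at h2t
  have : Tendsto (fun _ : ℕ => ‖(0 : E) - z t‖ ^ 2) atTop (nhds (‖(0 : E) - z t‖ ^ 2)) :=
    tendsto_const_nhds
  have heq := tendsto_nhds_unique this h2t
  have h0 : ‖(0 : E) - z t‖ = 0 :=
    pow_eq_zero_iff (n := 2) (by norm_num) |>.mp heq
  simpa using (norm_eq_zero.mp h0).symm
end

section
/- If a square-mean almost automorphic function f : ℝ → L²(P,H) and a decaying semigroup T (‖T(t)‖ ≤ Ke^{−ωt}) are given, then u(t) := ∫_{−∞}^t T(t−s) f(s) ds defines a square-mean almost automorphic process, and for any a ≤ t it satisfies u(t) = T(t−a)u(a) + ∫_a^t T(t−s) f(s) ds (cocycle/variation-of-constants identity). -/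
open Filter MeasureTheory Set Real

/-- From square-mean convergence to convergence in `L²`. -/
lemma tendsto_of_sq {E : Type*} [NormedAddCommGroup E] {x : ℕ → E} {c : E}
    (h : Tendsto (fun n => ‖x n - c‖ ^ 2) atTop (nhds 0)) : Tendsto x atTop (nhds c) := by
  rw [tendsto_iff_norm_sub_tendsto_zero]
  have h2 : Tendsto (fun n => Real.sqrt (‖x n - c‖ ^ 2)) atTop (nhds (Real.sqrt 0)) :=
    (Real.continuous_sqrt.tendsto 0).comp h
  have h3 : (fun n => Real.sqrt (‖x n - c‖ ^ 2)) = fun n => ‖x n - c‖ :=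
    funext fun n => Real.sqrt_sq (norm_nonneg _)
  rw [h3] at h2
  simpa using h2

/-- From convergence in `L²` to square-mean convergence. -/
lemma sq_of_tendsto {E : Type*} [NormedAddCommGroup E] {x : ℕ → E} {c : E}
    (h : Tendsto x atTop (nhds c)) :
    Tendsto (fun n => ‖x n - c‖ ^ 2) atTop (nhds 0) := by
  have h1 : Tendsto (fun n => ‖x n - c‖) atTop (nhds 0) :=
    tendsto_iff_norm_sub_tendsto_zero.mp h
  simpa using h1.pow 2

/-- Dominated convergence for the convolution with an exponentially decaying semigroup. -/
lemma conv_tendsto {E : Type*} [NormedAddCommGroup E] [NormedSpace ℝ E] [CompleteSpace E]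
    (T : ℝ → E →L[ℝ] E) (K ω M : ℝ) (hω : 0 < ω)
    (hTb : ∀ t : ℝ, 0 ≤ t → ‖T t‖ ≤ K * Real.exp (-ω * t))
    {ι : Type*} (l : Filter ι) [l.IsCountablyGenerated]
    (t : ℝ) (F : ι → ℝ → E) (g : ℝ → E)
    (hmeas : ∀ n, AEStronglyMeasurable (fun s => T (t - s) (F n s)) (volume.restrict (Iic t)))
    (hFb : ∀ n s, ‖F n s‖ ≤ M)
    (hlim : ∀ s, Tendsto (fun n => F n s) l (nhds (g s))) :
    Tendsto (fun n => ∫ s in Iic t, T (t - s) (F n s)) l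
      (nhds (∫ s in Iic t, T (t - s) (g s))) := by
  have hbint : IntegrableOn (fun s => K * Real.exp (-ω * (t - s)) * M) (Iic t) := by
    have h1 : IntegrableOn (fun x : ℝ => Real.exp (-ω * x)) (Ioi (-t)) :=
      exp_neg_integrableOn_Ioi _ hω
    have h2 := (MeasurePreserving.integrableOn_comp_preimage
      (Measure.measurePreserving_neg (volume : Measure ℝ))
      (Homeomorph.neg ℝ).measurableEmbedding).2 h1
    have hpre : (Neg.neg : ℝ → ℝ) ⁻¹' Ioi (-t) = Iio t := by
      ext x
      simp
    rw [hpre] at h2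
    have h3 : IntegrableOn (fun s : ℝ => Real.exp (-ω * (-s))) (Iic t) := by
      rw [integrableOn_Iic_iff_integrableOn_Iio]
      exact h2
    have h4 : IntegrableOn (fun s : ℝ => K * M * Real.exp (-ω * t) * Real.exp (-ω * -s))
        (Iic t) := h3.const_mul (K * M * Real.exp (-ω * t))
    apply h4.congr_fun _ measurableSet_Iic
    intro s _
    show K * M * Real.exp (-ω * t) * Real.exp (-ω * -s) = K * Real.exp (-ω * (t - s)) * M
    rw [mul_assoc, ← Real.exp_add]
    ring_nf
  apply tendsto_integral_filter_of_dominated_convergence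
      (fun s => K * Real.exp (-ω * (t - s)) * M)
  · exact Eventually.of_forall hmeas
  · filter_upwards with n
    filter_upwards [ae_restrict_mem measurableSet_Iic] with s hs
    calc ‖T (t - s) (F n s)‖ ≤ ‖T (t - s)‖ * ‖F n s‖ := (T (t - s)).le_opNorm _
      _ ≤ (K * Real.exp (-ω * (t - s))) * M := by
          apply mul_le_mul (hTb _ (sub_nonneg.2 hs)) (hFb n s) (norm_nonneg _)
          exact (norm_nonneg _).trans (hTb _ (sub_nonneg.2 hs))
  · exact hbint
  · exact Eventually.of_forall fun s => ((T (t - s)).continuous.tendsto _).comp (hlim s)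

/-- For a square-mean almost automorphic `f` and an exponentially decaying
`C₀`-semigroup `T`, the convolution `u(t) = ∫_{−∞}^t T(t−s) f(s) ds` is
square-mean almost automorphic and satisfies the variation-of-constants
identity `u(t) = T(t−a) u(a) + ∫_a^t T(t−s) f(s) ds` for `a ≤ t`. -/
theorem sqMeanAA_convolution {E : Type*} [NormedAddCommGroup E]
    [NormedSpace ℝ E] [CompleteSpace E]
    (T : ℝ → E →L[ℝ] E) (K ω : ℝ) (hK : 0 < K) (hω : 0 < ω)
    (hT0 : T 0 = ContinuousLinearMap.id ℝ E)
    (hsem : ∀ s : ℝ, 0 ≤ s → ∀ t : ℝ, 0 ≤ t → T (s + t) = (T s).comp (T t))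
    (hTb : ∀ t : ℝ, 0 ≤ t → ‖T t‖ ≤ K * Real.exp (-ω * t))
    (hTc : Continuous fun p : ℝ × E => T p.1 p.2)
    (f : ℝ → E) (hf : SqMeanAA f)
    (hInt : ∀ t : ℝ, IntegrableOn (fun s => T (t - s) (f s)) (Iic t))
    (u : ℝ → E) (hu : ∀ t : ℝ, u t = ∫ s in Iic t, T (t - s) (f s)) :
    SqMeanAA u ∧
      ∀ a t : ℝ, a ≤ t →
        u t = T (t - a) (u a) + ∫ s in Ioc a t, T (t - s) (f s) := by
  -- boundedness of f
  obtain ⟨M, hM⟩ : ∃ M : ℝ, ∀ t, ‖f t‖ ≤ M := by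
    by_contra hc
    push_neg at hc
    have hc' : ∀ n : ℕ, ∃ t, (n : ℝ) < ‖f t‖ := fun n => hc n
    choose s hs using hc'
    obtain ⟨φ, hφ, y, h1, h2⟩ := hf.2 s
    have hcv : Tendsto (fun n => f (0 + s (φ n))) atTop (nhds (y 0)) := tendsto_of_sq (h1 0)
    have hn : Tendsto (fun n => ‖f (0 + s (φ n))‖) atTop (nhds ‖y 0‖) := hcv.norm
    have hbdd : ∀ᶠ n in atTop, ‖f (0 + s (φ n))‖ < ‖y 0‖ + 1 :=
      hn.eventually_lt_const (lt_add_one _)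
    obtain ⟨N, hN⟩ := eventually_atTop.mp hbdd
    obtain ⟨m, hm⟩ := exists_nat_gt (‖y 0‖ + 1)
    have hkey := hN (max N m) (le_max_left _ _)
    have h3 : (max N m : ℝ) < ‖f (s (φ (max N m)))‖ := by
      calc (max N m : ℝ) ≤ (φ (max N m) : ℝ) := by exact_mod_cast hφ.le_apply
        _ < ‖f (s (φ (max N m)))‖ := hs _
    rw [zero_add] at hkey
    have : (m : ℝ) ≤ (max N m : ℝ) := by exact_mod_cast le_max_right N m
    linarith
  -- translation identity
  have trans : ∀ (h : ℝ → E) (t τ : ℝ),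
      (∫ s in Iic (t + τ), T (t + τ - s) (h s)) = ∫ s in Iic t, T (t - s) (h (s + τ)) := by
    intro h t τ
    rw [← integral_indicator measurableSet_Iic, ← integral_indicator measurableSet_Iic]
    rw [← integral_add_right_eq_self
      (fun s => (Iic (t + τ)).indicator (fun s' => T (t + τ - s') (h s')) s) τ]
    congr 1
    funext s
    by_cases hst : s ≤ t
    · rw [indicator_of_mem (by simpa [mem_Iic] using add_le_add_right hst τ),
        indicator_of_mem (by simpa [mem_Iic] using hst)]
      congr 2
      ring
    · rw [indicator_of_notMem (fun hh => hst (by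
        have : s + τ ≤ t + τ := hh
        linarith)),
        indicator_of_notMem (by simpa [mem_Iic] using hst)]
  -- measurability of the f-integrands
  have hfmeas : ∀ (t c : ℝ),
      AEStronglyMeasurable (fun s => T (t - s) (f (s + c))) (volume.restrict (Iic t)) := by
    intro t c
    exact (hTc.comp ((continuous_const.sub continuous_id).prodMk
      (hf.1.comp (continuous_id.add continuous_const)))).aestronglyMeasurable
  -- continuity of u
  have hcont : Continuous u := by
    rw [continuous_iff_continuousAt]
    intro t
    have hΦ : Tendsto (fun τ => ∫ s in Iic t, T (t - s) (f (s + τ))) (nhds (0 : ℝ))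
        (nhds (∫ s in Iic t, T (t - s) (f s))) := by
      have := conv_tendsto T K ω M hω hTb (nhds (0 : ℝ)) t (fun τ s => f (s + τ)) f
        (fun τ => hfmeas t τ) (fun τ s => hM _)
        (fun s => by
          have : Tendsto (fun τ : ℝ => s + τ) (nhds 0) (nhds s) := by
            have hc : Continuous fun τ : ℝ => s + τ := continuous_const.add continuous_id
            simpa using hc.tendsto (0 : ℝ)
          exact (hf.1.tendsto s).comp this)
      exact this
    have h0 : Tendsto (fun t' : ℝ => t' - t) (nhds t) (nhds 0) := by
      have hc : Continuous fun x : ℝ => x - t := (continuous_id : Continuous fun x : ℝ => x).sub (continuous_const (y := t))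
      have := hc.tendsto t
      simpa using this
    have hcomp := hΦ.comp h0
    have heq : ∀ t', u t' = ∫ s in Iic t, T (t - s) (f (s + (t' - t))) := by
      intro t'
      have htr := trans f t (t' - t)
      rw [add_sub_cancel] at htr
      rw [hu t', htr]
    rw [ContinuousAt, hu t]
    apply hcomp.congr
    intro t'
    exact (heq t').symm
  refine ⟨⟨hcont, ?_⟩, ?_⟩
  · -- almost automorphy
    intro s'
    obtain ⟨φ, hφ, g, hg1, hg2⟩ := hf.2 s'
    have hgm : StronglyMeasurable g := by
      apply stronglyMeasurable_of_tendsto atTop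
        (f := fun n => fun t => f (t + s' (φ n)))
        (fun n => (hf.1.comp (continuous_id.add continuous_const)).stronglyMeasurable)
      exact tendsto_pi_nhds.2 fun t => tendsto_of_sq (hg1 t)
    have hgb : ∀ t, ‖g t‖ ≤ M := fun t =>
      le_of_tendsto (tendsto_of_sq (hg1 t)).norm (Eventually.of_forall fun n => hM _)
    have hgmeas : ∀ (t c : ℝ),
        AEStronglyMeasurable (fun s => T (t - s) (g (s + c))) (volume.restrict (Iic t)) := by
      intro t c
      exact (hTc.comp_stronglyMeasurable
        ((continuous_const.sub continuous_id).stronglyMeasurable.prodMk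
          (hgm.comp_measurable (measurable_id.add_const c)))).aestronglyMeasurable
    refine ⟨φ, hφ, fun r => ∫ s in Iic r, T (r - s) (g s), ?_, ?_⟩
    · intro t
      apply sq_of_tendsto
      have hmain := conv_tendsto T K ω M hω hTb atTop t
        (fun n s => f (s + s' (φ n))) g (fun n => hfmeas t _) (fun n s => hM _)
        (fun s => tendsto_of_sq (hg1 s))
      apply hmain.congr
      intro n
      rw [hu (t + s' (φ n)), trans f t (s' (φ n))]
    · intro t
      apply sq_of_tendsto
      have hmain := conv_tendsto T K ω M hω hTb atTop t
        (fun n s => g (s + -(s' (φ n)))) f (fun n => hgmeas t _) (fun n s => hgb _)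
        (fun s => by simpa [sub_eq_add_neg] using tendsto_of_sq (hg2 s))
      rw [hu t]
      apply hmain.congr
      intro n
      rw [← trans g t (-(s' (φ n)))]
      norm_num [sub_eq_add_neg]
  · -- variation of constants identity
    intro a t hat
    have hIic : IntegrableOn (fun s => T (t - s) (f s)) (Iic a) :=
      (hInt t).mono_set (Iic_subset_Iic.2 hat)
    have hIoc : IntegrableOn (fun s => T (t - s) (f s)) (Ioc a t) :=
      (hInt t).mono_set Ioc_subset_Iic_self
    rw [hu t, ← Iic_union_Ioc_eq_Iic hat,
      setIntegral_union (Iic_disjoint_Ioc le_rfl) measurableSet_Ioc hIic hIoc]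
    congr 1
    calc (∫ s in Iic a, T (t - s) (f s))
        = ∫ s in Iic a, T (t - a) (T (a - s) (f s)) := by
          apply setIntegral_congr_fun measurableSet_Iic
          intro s hs
          have hsem' := hsem (t - a) (sub_nonneg.2 hat) (a - s) (sub_nonneg.2 hs)
          have : T (t - s) = (T (t - a)).comp (T (a - s)) := by
            rw [← hsem']
            congr 1
            ring
          show T (t - s) (f s) = T (t - a) (T (a - s) (f s))
          rw [this]
          rfl
      _ = T (t - a) (∫ s in Iic a, T (a - s) (f s)) :=
          ContinuousLinearMap.integral_comp_comm _ (hInt a)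
      _ = T (t - a) (u a) := by rw [hu a]
end
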